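/- For every n ≥ 3, algorithm EATR of type (2,n) is 3/2-competitive: there exists a constant a such that for every request sequence σ, the expected cost of EATR satisfies E[C_EATR(σ)] ≤ (3/2)·OPT(σ) + a. -/

import Mathlib

/-!
Paging model with `k = 2`: vertices are `Fin n` (`n ≥ 3`), configurations are
2-element subsets of `Fin n`.  `OPT` is the optimal offline cost and `expCost`
the expected cost of a randomized online algorithm (given by its transition
kernel), starting from the configuration `{0,1}`.

Algorithm EATR: the request sequence is partitioned into phases; within a phase,
EATR keeps one server on the most recently requested vertex and the other
uniformly at random among the stale vertices (the vertices, among those occupied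
at the end of the previous phase or requested during the current phase, that are
neither clean nor the most recently requested vertex); when a stale vertex is
requested, the servers are placed on the two most recently requested vertices
and the phase ends.

The bookkeeping fold `eatrState` maintains the pair `(act, mru)` where `act` is
the set of vertices occupied at the end of the previous phase or requested
during the current phase, and `mru` is the most recently requested vertex, so
that the stale set is `act \ {mru}`.  The kernel `eatrKernel` implements the
resulting server movements: a request to a covered vertex moves nothing; a
request to an uncovered stale vertex moves the non-`mru` server there (ending the
phase); a request to a clean vertex `r` moves, with probability `1/|act|`, the
non-`mru` server to `r` (keeping a server on `mru`), and otherwise moves the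
`mru` server to `r` — this keeps the random server uniform on the new stale set.

STATEMENT: For every `n ≥ 3`, algorithm EATR of type `(2,n)` is
`3/2`-competitive: there exists a constant `a` such that for every request
sequence `σ`, `E[C_EATR(σ)] ≤ (3/2)·OPT(σ) + a`.
-/

open scoped ENNReal

/-- The initial configuration `{0, …, k−1}` as a subset of `Fin n`. -/
def initConf (k n : ℕ) : Finset (Fin n) :=
  Finset.univ.filter (fun v => (v : ℕ) < k)

/-- The cost of a sequence of configurations, starting from configuration `C`:
the sum over consecutive steps of the number of newly covered vertices. -/
def listCost {n : ℕ} : Finset (Fin n) → List (Finset (Fin n)) → ℕ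
  | _, [] => 0
  | C, D :: L => (D \ C).card + listCost D L

/-- `Cs` is a service of the request sequence `σ` by `k`-element configurations:
the `t`-th configuration covers the `t`-th request. -/
def Serves {n : ℕ} (k : ℕ) (σ : List (Fin n)) (Cs : List (Finset (Fin n))) : Prop :=
  List.Forall₂ (· ∈ ·) σ Cs ∧ ∀ C ∈ Cs, C.card = k

/-- The optimal offline cost of serving `σ`, starting from `{0,…,k−1}`. -/
noncomputable def OPT (k n : ℕ) (σ : List (Fin n)) : ℕ :=
  sInf {m | ∃ Cs, Serves k σ Cs ∧ listCost (initConf k n) Cs = m}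

/-- A (transition kernel of a) randomized online algorithm: given the request history,
the current configuration and a new request, produce a distribution over configurations. -/
abbrev Kernel (n : ℕ) := List (Fin n) → Finset (Fin n) → Fin n → PMF (Finset (Fin n))

/-- The distribution over configuration sequences induced by running kernel `K`
on request sequence `σ`, with history `hist` and current configuration `C`. -/
noncomputable def runFrom {n : ℕ} (K : Kernel n) :
    List (Fin n) → List (Fin n) → Finset (Fin n) → PMF (List (Finset (Fin n)))
  | [], _, _ => PMF.pure []
  | r :: rest, hist, C =>
      (K hist C r).bind fun C' =>
        (runFrom K rest (hist ++ [r]) C').map fun L => C' :: L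

/-- The distribution over configuration sequences induced by running kernel `K`
on request sequence `σ`, starting from the configuration `{0,…,k−1}`. -/
noncomputable def run {n : ℕ} (k : ℕ) (K : Kernel n) (σ : List (Fin n)) :
    PMF (List (Finset (Fin n))) :=
  runFrom K σ [] (initConf k n)

/-- The expected cost of the randomized online algorithm with kernel `K` on `σ`. -/
noncomputable def expCost {n : ℕ} (k : ℕ) (K : Kernel n) (σ : List (Fin n)) : ℝ :=
  ∑' Cs : List (Finset (Fin n)),
    ((run k K σ) Cs).toReal * (listCost (initConf k n) Cs : ℝ)

/-- One step of the marking process: mark `r`; if `k+1` vertices are marked,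
erase all marks except the one on `r`. -/
def markUpdate {n : ℕ} (k : ℕ) (M : Finset (Fin n)) (r : Fin n) : Finset (Fin n) :=
  if (insert r M).card = k + 1 then {r} else insert r M

/-- The set of marked vertices after processing the request sequence `σ`
(initially the vertices `{0,…,k−1}` are marked). -/
def marksAfter {n : ℕ} (k : ℕ) (σ : List (Fin n)) : Finset (Fin n) :=
  σ.foldl (markUpdate k) (initConf k n)

/-- The marking algorithm of type `(k,n)`: on a request `r`, first update the marks;
if `r` is covered do nothing, and otherwise evict a uniformly random unmarked
covered vertex and move its server to `r`. -/
noncomputable def markingKernel (k n : ℕ) : Kernel n := fun hist C r =>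
  let M := marksAfter k (hist ++ [r])
  if r ∈ C then PMF.pure C
  else if h : (C \ M).Nonempty then
    (PMF.uniformOfFinset (C \ M) h).map fun u => insert r (C.erase u)
  else PMF.pure (insert r (C.erase (if h2 : C.Nonempty then C.min' h2 else r)))

/-- One step of EATR's phase bookkeeping on the pair `(act, mru)`. -/
def eatrStep {n : ℕ} (s : Finset (Fin n) × Fin n) (r : Fin n) : Finset (Fin n) × Fin n :=
  if r = s.2 then s
  else if r ∈ s.1 then ({s.2, r}, r)
  else (insert r s.1, r)

/-- EATR's phase bookkeeping state after processing the request sequence `σ`: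
initially the active set is `{0,1}` and the most recently requested vertex is
taken to be the vertex `1`. -/
def eatrState (n : ℕ) (hn : 3 ≤ n) (σ : List (Fin n)) : Finset (Fin n) × Fin n :=
  σ.foldl eatrStep (initConf 2 n, ⟨1, by omega⟩)

/-- Algorithm EATR of type `(2,n)`. -/
noncomputable def eatrKernel (n : ℕ) (hn : 3 ≤ n) : Kernel n := fun hist C r =>
  let s := eatrState n hn hist
  if r ∈ C then PMF.pure C
  else if r ∈ s.1 then PMF.pure (insert r {s.2})
  else if h : s.1.Nonempty then
    (PMF.uniformOfFinset s.1 h).map fun z =>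
      if z = s.2 then insert r {s.2} else insert r (C.erase s.2)
  else PMF.pure (insert r {s.2})

section PMFHelpers

open scoped ENNReal

variable {α β : Type*}

lemma pmf_tsum_pure (x : α) (g : α → ℝ≥0∞) :
    ∑' b, (PMF.pure x : PMF α) b * g b = g x := by
  rw [tsum_eq_single x]
  · simp [PMF.pure_apply]
  · intro b hb; simp [PMF.pure_apply_of_ne _ _ hb]

lemma pmf_tsum_bind (q : PMF α) (f : α → PMF β) (g : β → ℝ≥0∞) :
    ∑' b, (q.bind f) b * g b = ∑' a, q a * ∑' b, f a b * g b :=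
  calc ∑' b, (q.bind f) b * g b
      = ∑' b, ∑' a, q a * f a b * g b := by
        refine tsum_congr fun b => ?_
        rw [PMF.bind_apply, ENNReal.tsum_mul_right]
    _ = ∑' a, ∑' b, q a * f a b * g b := ENNReal.tsum_comm
    _ = ∑' a, q a * ∑' b, f a b * g b := by
        refine tsum_congr fun a => ?_
        rw [← ENNReal.tsum_mul_left]
        exact tsum_congr fun b => by rw [mul_assoc]

lemma pmf_tsum_map (q : PMF α) (F : α → β) (g : β → ℝ≥0∞) :
    ∑' b, (q.map F) b * g b = ∑' a, q a * g (F a) := by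
  rw [PMF.map, pmf_tsum_bind]
  exact tsum_congr fun a => by rw [Function.comp_apply, pmf_tsum_pure]

lemma pmf_tsum_uniform [Fintype α] [DecidableEq α] (s : Finset α) (h : s.Nonempty)
    (g : α → ℝ≥0∞) :
    ∑' a, (PMF.uniformOfFinset s h) a * g a = ∑ a ∈ s, (s.card : ℝ≥0∞)⁻¹ * g a := by
  rw [tsum_fintype]
  rw [← Finset.sum_subset (Finset.subset_univ s)]
  · refine Finset.sum_congr rfl fun a ha => by rw [PMF.uniformOfFinset_apply, if_pos ha]
  · intro a _ ha
    rw [PMF.uniformOfFinset_apply, if_neg ha, zero_mul]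

end PMFHelpers
open scoped ENNReal

/-- Expected cost (in `ℝ≥0∞`) of running kernel `K` on `rest` with history `hist`
from configuration `C`. -/
noncomputable def ecost {n : ℕ} (K : Kernel n) (rest hist : List (Fin n))
    (C : Finset (Fin n)) : ℝ≥0∞ :=
  ∑' Cs : List (Finset (Fin n)), (runFrom K rest hist C) Cs * (listCost C Cs : ℝ≥0∞)

lemma ecost_nil {n : ℕ} (K : Kernel n) (hist : List (Fin n)) (C : Finset (Fin n)) :
    ecost K [] hist C = 0 := by
  rw [ecost, runFrom, pmf_tsum_pure]
  simp [listCost]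

lemma ecost_cons {n : ℕ} (K : Kernel n) (r : Fin n) (rest hist : List (Fin n))
    (C : Finset (Fin n)) :
    ecost K (r :: rest) hist C =
      ∑' C' : Finset (Fin n), (K hist C r) C' *
        (((C' \ C).card : ℝ≥0∞) + ecost K rest (hist ++ [r]) C') := by
  rw [ecost, runFrom, pmf_tsum_bind]
  refine tsum_congr fun C' => ?_
  congr 1
  rw [pmf_tsum_map]
  calc ∑' L, (runFrom K rest (hist ++ [r]) C') L * (listCost C (C' :: L) : ℝ≥0∞)
      = ∑' L, ((runFrom K rest (hist ++ [r]) C') L * ((C' \ C).card : ℝ≥0∞)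
          + (runFrom K rest (hist ++ [r]) C') L * (listCost C' L : ℝ≥0∞)) := by
        refine tsum_congr fun L => ?_
        rw [← mul_add]
        congr 1
        simp [listCost]
    _ = ((C' \ C).card : ℝ≥0∞) + ecost K rest (hist ++ [r]) C' := by
        rw [ENNReal.tsum_add, ENNReal.tsum_mul_right, PMF.tsum_coe, one_mul, ecost]

/-- Number of clean requests (requests outside the active set) along `σ`,
starting from EATR bookkeeping state `s`. -/
def ccount {n : ℕ} : Finset (Fin n) × Fin n → List (Fin n) → ℕ
  | _, [] => 0
  | s, r :: rest => (if r ∈ s.1 then 0 else 1) + ccount (eatrStep s r) rest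

lemma eatrState_append {n : ℕ} (hn : 3 ≤ n) (hist : List (Fin n)) (r : Fin n) :
    eatrState n hn (hist ++ [r]) = eatrStep (eatrState n hn hist) r := by
  simp [eatrState, List.foldl_append]
open scoped ENNReal

lemma caseC_arith (T M Ep G : ℝ≥0∞) (hT1 : 1 ≤ T) (hTtop : T ≠ ∞)
    (hIH : 2*(Ep + G) + 2 ≤ (T+1)*(3*M+2)) :
    2*(T*((T+1)⁻¹*(1+Ep)) + T*((T+1)⁻¹*(T + G))) + 2 ≤ T*(3*(1+M)+2) := by
  have hC0 : (T+1) ≠ 0 := by simp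
  have hCtop : (T+1) ≠ ∞ := ENNReal.add_ne_top.mpr ⟨hTtop, ENNReal.one_ne_top⟩
  rw [← ENNReal.mul_le_mul_iff_left hC0 hCtop]
  have hinv : (T+1)⁻¹ * (T+1) = 1 := ENNReal.inv_mul_cancel hC0 hCtop
  have expand : (2*(T*((T+1)⁻¹*(1+Ep)) + T*((T+1)⁻¹*(T + G))) + 2)*(T+1)
      = (2*T*(1+Ep) + 2*T*(T+G)) * ((T+1)⁻¹*(T+1)) + 2*(T+1) := by ring
  rw [expand, hinv, mul_one]
  rw [← ENNReal.add_le_add_iff_right (show 2*T ≠ ∞ by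
    exact ENNReal.mul_ne_top (by norm_num) hTtop)]
  have h2 : (2:ℝ≥0∞) ≤ T*T + T := by
    calc (2:ℝ≥0∞) = 1*1 + 1 := by norm_num
      _ ≤ T*T + T := by gcongr
  calc 2*T*(1+Ep) + 2*T*(T+G) + 2*(T+1) + 2*T
      = T*(2*(Ep+G)+2) + 2*T*T + 2*(T+1) + 2*T := by ring
    _ ≤ T*((T+1)*(3*M+2)) + 2*T*T + 2*(T+1) + 2*T := by gcongr
    _ = (3*T*(T+1)*M + 2*T*(T+1) + 2*T*T + 2*T) + 2 + 2*T := by ring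
    _ ≤ (3*T*(T+1)*M + 2*T*(T+1) + 2*T*T + 2*T) + (T*T + T) + 2*T := by gcongr
    _ = (T*(3*(1+M)+2))*(T+1) + 2*T := by ring
open scoped ENNReal

lemma ccount_cons {n : ℕ} (s : Finset (Fin n) × Fin n) (r : Fin n) (rest : List (Fin n)) :
    ccount s (r :: rest) = (if r ∈ s.1 then 0 else 1) + ccount (eatrStep s r) rest := rfl

lemma eatr_key {n : ℕ} (hn : 3 ≤ n) (rest : List (Fin n)) :
    ∀ (hist : List (Fin n)) (act : Finset (Fin n)) (p : Fin n),
      eatrState n hn hist = (act, p) → p ∈ act → (act.erase p).Nonempty →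
      2 * (∑ z ∈ act.erase p, ecost (eatrKernel n hn) rest hist {p, z}) + 2 ≤
        ((act.erase p).card : ℝ≥0∞) * (3 * (ccount (act, p) rest : ℝ≥0∞) + 2) := by
  induction rest with
  | nil =>
    intro hist act p h hp hS
    have h1 : (1:ℝ≥0∞) ≤ ((act.erase p).card : ℝ≥0∞) := by
      have := Finset.card_pos.mpr hS
      exact_mod_cast this
    simp only [ecost_nil, Finset.sum_const_zero, mul_zero, zero_add, ccount]
    calc (2:ℝ≥0∞) = 1 * 2 := (one_mul 2).symm
      _ ≤ ((act.erase p).card : ℝ≥0∞) * (3 * ((0:ℕ):ℝ≥0∞) + 2) := by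
          rw [Nat.cast_zero, mul_zero, zero_add]; gcongr
  | cons r rest ih =>
    intro hist act p h hp hS
    by_cases hrp : r = p
    · -- request to the most recently used vertex: nothing happens
      subst hrp
      have hstate' : eatrState n hn (hist ++ [r]) = (act, r) := by
        rw [eatrState_append, h]; simp [eatrStep]
      have hred : ∀ z ∈ act.erase r,
          ecost (eatrKernel n hn) (r::rest) hist {r, z}
            = ecost (eatrKernel n hn) rest (hist ++ [r]) {r, z} := by
        intro z hz
        rw [ecost_cons]
        have hker : eatrKernel n hn hist {r, z} r = PMF.pure {r, z} := by
          simp [eatrKernel]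
        rw [hker, pmf_tsum_pure]
        simp
      rw [Finset.sum_congr rfl hred]
      have hcc : ccount (act, r) (r::rest) = ccount (act, r) rest := by
        rw [ccount_cons]
        simp [hp, eatrStep]
      rw [hcc]
      exact ih (hist ++ [r]) act r hstate' hp hS
    · by_cases hra : r ∈ act
      · -- stale request: the phase ends
        have hrS : r ∈ act.erase p := Finset.mem_erase.mpr ⟨hrp, hra⟩
        have hstate' : eatrState n hn (hist ++ [r]) = ({p, r}, r) := by
          rw [eatrState_append, h]; simp [eatrStep, hrp, hra]
        have hSset : ({p, r} : Finset (Fin n)).erase r = {p} := by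
          ext x
          simp only [Finset.mem_erase, Finset.mem_insert, Finset.mem_singleton]
          constructor
          · rintro ⟨hxr, hx | hx⟩
            · exact hx
            · exact absurd hx hxr
          · rintro rfl
            exact ⟨fun hc => hrp hc.symm, Or.inl rfl⟩
        have hihs := ih (hist ++ [r]) {p, r} r hstate' (by simp)
          (by rw [hSset]; exact Finset.singleton_nonempty p)
        rw [hSset, Finset.sum_singleton, Finset.card_singleton, Nat.cast_one, one_mul] at hihs
        -- hihs : 2 * ecost ... rest (hist++[r]) {r, p} + 2 ≤ 3 * cc' + 2
        have hredr : ecost (eatrKernel n hn) (r::rest) hist {p, r}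
            = ecost (eatrKernel n hn) rest (hist ++ [r]) {r, p} := by
          rw [ecost_cons]
          have hker : eatrKernel n hn hist {p, r} r = PMF.pure {p, r} := by
            simp [eatrKernel]
          rw [hker, pmf_tsum_pure]
          rw [Finset.sdiff_self]
          simp [Finset.pair_comm p r]
        have hredz : ∀ z ∈ (act.erase p).erase r,
            ecost (eatrKernel n hn) (r::rest) hist {p, z}
              = 1 + ecost (eatrKernel n hn) rest (hist ++ [r]) {r, p} := by
          intro z hz
          obtain ⟨hzr, hz2⟩ := Finset.mem_erase.mp hz
          obtain ⟨hzp, hza⟩ := Finset.mem_erase.mp hz2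
          have hrC : r ∉ ({p, z} : Finset (Fin n)) := by
            simp only [Finset.mem_insert, Finset.mem_singleton]
            push_neg
            exact ⟨hrp, fun e => hzr e.symm⟩
          have hker : eatrKernel n hn hist {p, z} r = PMF.pure (insert r {p}) := by
            simp only [eatrKernel, h]
            rw [if_neg hrC, if_pos hra]
          rw [ecost_cons, hker, pmf_tsum_pure]
          have hsd : insert r {p} \ ({p, z} : Finset (Fin n)) = {r} := by
            ext x
            simp only [Finset.mem_sdiff, Finset.mem_insert, Finset.mem_singleton]
            constructor
            · rintro ⟨hx | hx, hnx⟩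
              · exact hx
              · exact absurd (Or.inl hx) hnx
            · rintro rfl
              exact ⟨Or.inl rfl, fun hc => hc.elim hrp (fun e => hzr e.symm)⟩
          rw [hsd, Finset.card_singleton, Nat.cast_one]
        -- assemble the sum
        rw [← Finset.add_sum_erase _ _ hrS, hredr, Finset.sum_congr rfl hredz,
          Finset.sum_const, nsmul_eq_mul]
        have hcc : (ccount (act, p) (r::rest) : ℝ≥0∞) = (ccount ({p, r}, r) rest : ℝ≥0∞) := by
          rw [ccount_cons]
          simp [hra, eatrStep, hrp]
        rw [hcc]
        have hcard : ((act.erase p).card : ℝ≥0∞)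
            = (((act.erase p).erase r).card : ℝ≥0∞) + 1 := by
          rw [← Finset.card_erase_add_one hrS]; push_cast; ring
        rw [hcard]
        set E := ecost (eatrKernel n hn) rest (hist ++ [r]) {r, p} with hE
        set T := (((act.erase p).erase r).card : ℝ≥0∞) with hT
        set M := (ccount ({p, r}, r) rest : ℝ≥0∞) with hM
        calc 2 * (E + T * (1 + E)) + 2 = (T + 1) * (2 * E + 2) := by ring
          _ ≤ (T + 1) * (3 * M + 2) := by gcongr
      · -- clean request
        have hactne : act.Nonempty := ⟨p, hp⟩
        have hstate' : eatrState n hn (hist ++ [r]) = (insert r act, r) := by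
          rw [eatrState_append, h]; simp [eatrStep, hrp, hra]
        have hS' : (insert r act).erase r = act := Finset.erase_insert hra
        have hihs := ih (hist ++ [r]) (insert r act) r hstate' (Finset.mem_insert_self r act)
          (by rw [hS']; exact hactne)
        rw [hS', ← Finset.add_sum_erase _ _ hp] at hihs
        set Ep := ecost (eatrKernel n hn) rest (hist ++ [r]) {r, p} with hEp
        set G := ∑ z ∈ act.erase p, ecost (eatrKernel n hn) rest (hist ++ [r]) {r, z} with hG
        set T := (((act.erase p).card : ℕ) : ℝ≥0∞) with hTdef
        have hcard : ((act.card : ℕ) : ℝ≥0∞) = T + 1 := by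
          rw [hTdef, ← Finset.card_erase_add_one hp]; push_cast; ring
        have hred : ∀ z ∈ act.erase p, ecost (eatrKernel n hn) (r::rest) hist {p, z}
            = (T+1)⁻¹*(1+Ep) + T * ((T+1)⁻¹*(1+ecost (eatrKernel n hn) rest (hist ++ [r]) {r, z})) := by
          intro z hz
          obtain ⟨hzp, hza⟩ := Finset.mem_erase.mp hz
          have hrC : r ∉ ({p, z} : Finset (Fin n)) := by
            simp only [Finset.mem_insert, Finset.mem_singleton]
            push_neg
            exact ⟨hrp, fun e => hra (e ▸ hza)⟩
          have herase : ({p, z} : Finset (Fin n)).erase p = {z} :=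
            Finset.erase_insert (by simp [Ne.symm hzp])
          have hker : eatrKernel n hn hist {p, z} r
              = (PMF.uniformOfFinset act hactne).map
                  (fun z' => if z' = p then insert r {p} else insert r {z}) := by
            simp only [eatrKernel, h]
            rw [if_neg hrC, if_neg hra, dif_pos hactne, herase]
          rw [ecost_cons, hker, pmf_tsum_map, pmf_tsum_uniform,
            ← Finset.add_sum_erase _ _ hp]
          have hcard1 : ((insert r {p} \ ({p, z} : Finset (Fin n))).card : ℝ≥0∞) = 1 := by
            have : insert r {p} \ ({p, z} : Finset (Fin n)) = {r} := by
              ext x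
              simp only [Finset.mem_sdiff, Finset.mem_insert, Finset.mem_singleton]
              constructor
              · rintro ⟨hx | hx, hnx⟩
                · exact hx
                · exact absurd (Or.inl hx) hnx
              · rintro rfl
                exact ⟨Or.inl rfl, fun hc => hc.elim hrp (fun e => hra (e ▸ hza))⟩
            rw [this, Finset.card_singleton, Nat.cast_one]
          have hterm : ∀ z' ∈ act.erase p,
              ((act.card : ℕ) : ℝ≥0∞)⁻¹ *
                ((((if z' = p then insert r {p} else insert r {z}) \ ({p, z} : Finset (Fin n))).card : ℝ≥0∞)
                  + ecost (eatrKernel n hn) rest (hist ++ [r]) (if z' = p then insert r {p} else insert r {z}))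
              = (T+1)⁻¹*(1+ecost (eatrKernel n hn) rest (hist ++ [r]) {r, z}) := by
            intro z' hz'
            rw [if_neg (Finset.mem_erase.mp hz').1, hcard]
            congr 2
            have : insert r {z} \ ({p, z} : Finset (Fin n)) = {r} := by
              ext x
              simp only [Finset.mem_sdiff, Finset.mem_insert, Finset.mem_singleton]
              constructor
              · rintro ⟨hx | hx, hnx⟩
                · exact hx
                · exact absurd (Or.inr hx) hnx
              · rintro rfl
                exact ⟨Or.inl rfl, fun hc => hc.elim hrp (fun e => hra (e ▸ hza))⟩
            rw [this, Finset.card_singleton, Nat.cast_one]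
          rw [Finset.sum_congr rfl hterm, if_pos rfl, hcard1, Finset.sum_const, nsmul_eq_mul,
            hcard]
        rw [Finset.sum_congr rfl hred, Finset.sum_add_distrib, Finset.sum_const, nsmul_eq_mul,
          ← Finset.mul_sum]
        have hsum2 : ∑ z ∈ act.erase p, (T+1)⁻¹*(1+ecost (eatrKernel n hn) rest (hist ++ [r]) {r, z})
            = (T+1)⁻¹ * (T + G) := by
          rw [← Finset.mul_sum]
          congr 1
          rw [Finset.sum_add_distrib, Finset.sum_const, nsmul_eq_mul, mul_one, hG]
        rw [hsum2]
        have hcc : ((ccount (act, p) (r::rest) : ℕ) : ℝ≥0∞)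
            = 1 + ((ccount (insert r act, r) rest : ℕ) : ℝ≥0∞) := by
          rw [ccount_cons]
          simp only [eatrStep, hrp, hra, if_neg, if_false]
          push_cast
          simp [hra, hrp]
        rw [hcc]
        have hT1 : (1:ℝ≥0∞) ≤ T := by
          rw [hTdef]
          exact_mod_cast Finset.card_pos.mpr hS
        have hTtop : T ≠ ∞ := by rw [hTdef]; exact ENNReal.natCast_ne_top _
        rw [hcard] at hihs
        have harith := caseC_arith T ((ccount (insert r act, r) rest : ℕ) : ℝ≥0∞) Ep G hT1 hTtop
          (by rw [mul_add] at hihs ⊢; exact hihs)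
        calc 2 * (T * ((T+1)⁻¹*(1+Ep)) + T * ((T+1)⁻¹ * (T + G))) + 2
            ≤ T * (3 * (1 + ((ccount (insert r act, r) rest : ℕ) : ℝ≥0∞)) + 2) := harith
          _ = T * (3 * (1 + ((ccount (insert r act, r) rest : ℕ) : ℝ≥0∞)) + 2) := rfl
/-! ### Lower bound on the offline cost -/

lemma exists_pair_eq {α : Type*} [DecidableEq α] {D : Finset α} {r : α}
    (h2 : D.card = 2) (hr : r ∈ D) : ∃ d, d ≠ r ∧ D = {r, d} := by
  obtain ⟨a, b, hab, rfl⟩ := Finset.card_eq_two.mp h2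
  rcases Finset.mem_insert.mp hr with rfl | hb
  · exact ⟨b, fun e => hab e.symm, rfl⟩
  · rcases Finset.mem_singleton.mp hb with rfl
    exact ⟨a, hab, Finset.pair_comm a r⟩

lemma pair_sdiff_mem {α : Type*} [DecidableEq α] {r d p z x : α}
    (hx : x ∈ ({r, d} : Finset α)) (h1 : x ≠ p) (h2 : x ≠ z) :
    x ∈ ({r, d} : Finset α) \ ({p, z} : Finset α) := by
  rw [Finset.mem_sdiff]
  refine ⟨hx, ?_⟩
  simp only [Finset.mem_insert, Finset.mem_singleton]
  rintro (rfl | rfl)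
  · exact h1 rfl
  · exact h2 rfl

lemma psi_lipschitz {n : ℕ} (act : Finset (Fin n)) (p : Fin n)
    (hS : (act.erase p).Nonempty) (D D' : Finset (Fin n)) :
    (act.erase p).inf' hS (fun z => (D' \ {p, z}).card) ≤
      (act.erase p).inf' hS (fun z => (D \ {p, z}).card) + (D' \ D).card := by
  obtain ⟨z0, hz0, hmin⟩ := Finset.exists_mem_eq_inf' hS (fun z => (D \ {p, z}).card)
  rw [hmin]
  calc (act.erase p).inf' hS (fun z => (D' \ {p, z}).card) ≤ (D' \ {p, z0}).card :=
        Finset.inf'_le _ hz0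
    _ ≤ (D \ {p, z0}).card + (D' \ D).card := by
        have hsub : D' \ {p, z0} ⊆ (D \ {p, z0}) ∪ (D' \ D) := by
          intro x
          simp only [Finset.mem_sdiff, Finset.mem_union]
          tauto
        calc (D' \ {p, z0}).card ≤ ((D \ {p, z0}) ∪ (D' \ D)).card := Finset.card_le_card hsub
          _ ≤ _ := Finset.card_union_le _ _

lemma psi_request {n : ℕ} (act act' : Finset (Fin n)) (p p' r : Fin n) (D : Finset (Fin n))
    (hp : p ∈ act) (hS : (act.erase p).Nonempty)
    (hstep : eatrStep (act, p) r = (act', p')) (hS' : (act'.erase p').Nonempty)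
    (hr : r ∈ D) (hD : D.card = 2) :
    (if r ∈ act then 0 else 1) + (act'.erase p').inf' hS' (fun z => (D \ {p', z}).card) ≤
      (act.erase p).inf' hS (fun z => (D \ {p, z}).card) := by
  by_cases hrp : r = p
  · subst hrp
    have hstep' : eatrStep (act, r) r = (act, r) := by simp [eatrStep]
    rw [hstep'] at hstep
    injection hstep with h1 h2
    subst h1; subst h2
    rw [if_pos hp, zero_add]

  · by_cases hra : r ∈ act
    · -- stale request
      have hstep' : eatrStep (act, p) r = ({p, r}, r) := by simp [eatrStep, hrp, hra]
      rw [hstep'] at hstep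
      injection hstep with h1 h2
      subst h1; subst h2
      rw [if_pos hra, zero_add]
      refine Finset.le_inf' hS _ (fun z hz => ?_)
      obtain ⟨hzp, hza⟩ := Finset.mem_erase.mp hz
      have hmem : p ∈ ({p, r} : Finset (Fin n)).erase r :=
        Finset.mem_erase.mpr ⟨fun e => hrp e.symm, by simp⟩
      have h1 : (({p, r} : Finset (Fin n)).erase r).inf' hS' (fun w => (D \ {r, w}).card)
          ≤ (D \ {r, p}).card := Finset.inf'_le _ hmem
      refine le_trans h1 ?_
      obtain ⟨d, hdr, rfl⟩ := exists_pair_eq hD hr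
      by_cases hdp : d = p
      · subst hdp
        have he : ({r, d} : Finset (Fin n)) \ {r, d} = ∅ := Finset.sdiff_self _
        rw [he]
        simp
      · have hle : ({r, d} : Finset (Fin n)) \ {r, p} ⊆ {d} := by
          intro x
          simp only [Finset.mem_sdiff, Finset.mem_insert, Finset.mem_singleton]
          tauto
        have h1' : (({r, d} : Finset (Fin n)) \ {r, p}).card ≤ 1 := by
          calc (({r, d} : Finset (Fin n)) \ {r, p}).card
              ≤ ({d} : Finset (Fin n)).card := Finset.card_le_card hle
            _ = 1 := Finset.card_singleton d
        have h2 : ((({r, d} : Finset (Fin n))) \ {p, z}).Nonempty := by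
          by_cases hzr : z = r
          · exact ⟨d, pair_sdiff_mem (by simp) hdp (fun e => hdr (e.trans hzr))⟩
          · exact ⟨r, pair_sdiff_mem (by simp) hrp (fun e => hzr e.symm)⟩
        exact le_trans h1' (Finset.card_pos.mpr h2)
    · -- clean request
      have hstep' : eatrStep (act, p) r = (insert r act, r) := by simp [eatrStep, hrp, hra]
      rw [hstep'] at hstep
      injection hstep with h1 h2
      subst h1; subst h2
      rw [if_neg hra]
      refine Finset.le_inf' hS _ (fun z hz => ?_)
      obtain ⟨hzp, hza⟩ := Finset.mem_erase.mp hz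
      obtain ⟨d, hdr, rfl⟩ := exists_pair_eq hD hr
      have hrz : r ≠ z := fun e => hra (e ▸ hza)
      have hrp' : r ≠ p := hrp
      by_cases hda : d ∈ act
      · have hmem : d ∈ (insert r act).erase r :=
          Finset.mem_erase.mpr ⟨hdr, Finset.mem_insert_of_mem hda⟩
        have h1 : ((insert r act).erase r).inf' hS' (fun w => (({r, d} : Finset (Fin n)) \ {r, w}).card)
            ≤ (({r, d} : Finset (Fin n)) \ {r, d}).card := Finset.inf'_le _ hmem
        have he : ({r, d} : Finset (Fin n)) \ {r, d} = ∅ := Finset.sdiff_self _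
        rw [he, Finset.card_empty] at h1
        have h2 : ((({r, d} : Finset (Fin n))) \ {p, z}).Nonempty :=
          ⟨r, pair_sdiff_mem (by simp) hrp' hrz⟩
        have h3 := Finset.card_pos.mpr h2
        omega
      · have hmem : p ∈ (insert r act).erase r :=
          Finset.mem_erase.mpr ⟨fun e => hrp e.symm, Finset.mem_insert_of_mem hp⟩
        have h1 : ((insert r act).erase r).inf' hS' (fun w => (({r, d} : Finset (Fin n)) \ {r, w}).card)
            ≤ (({r, d} : Finset (Fin n)) \ {r, p}).card := Finset.inf'_le _ hmem
        have hle : ({r, d} : Finset (Fin n)) \ {r, p} ⊆ {d} := by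
          intro x
          simp only [Finset.mem_sdiff, Finset.mem_insert, Finset.mem_singleton]
          tauto
        have h1' : (({r, d} : Finset (Fin n)) \ {r, p}).card ≤ 1 := by
          calc (({r, d} : Finset (Fin n)) \ {r, p}).card
              ≤ ({d} : Finset (Fin n)).card := Finset.card_le_card hle
            _ = 1 := Finset.card_singleton d
        have h2 : ({r, d} : Finset (Fin n)) ⊆ ({r, d} : Finset (Fin n)) \ {p, z} := by
          intro x hx
          rcases Finset.mem_insert.mp hx with rfl | hx'
          · exact pair_sdiff_mem (by simp) hrp' hrz
          · rcases Finset.mem_singleton.mp hx' with rfl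
            exact pair_sdiff_mem (by simp) (fun e => hda (e ▸ hp)) (fun e => hda (e ▸ hza))
        have h3 : 2 ≤ ((({r, d} : Finset (Fin n))) \ {p, z}).card := by
          calc 2 = ({r, d} : Finset (Fin n)).card := hD.symm
            _ ≤ _ := Finset.card_le_card h2
        omega
lemma eatrStep_inv {n : ℕ} {act act' : Finset (Fin n)} {p p' r : Fin n}
    (hp : p ∈ act) (hS : (act.erase p).Nonempty)
    (hst : eatrStep (act, p) r = (act', p')) : p' ∈ act' ∧ (act'.erase p').Nonempty := by
  by_cases hrp : r = p
  · subst hrp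
    have : eatrStep (act, r) r = (act, r) := by simp [eatrStep]
    rw [this] at hst
    injection hst with h1 h2
    subst h1; subst h2
    exact ⟨hp, hS⟩
  · by_cases hra : r ∈ act
    · have : eatrStep (act, p) r = ({p, r}, r) := by simp [eatrStep, hrp, hra]
      rw [this] at hst
      injection hst with h1 h2
      subst h1; subst h2
      refine ⟨by simp, ⟨p, Finset.mem_erase.mpr ⟨fun e => hrp e.symm, by simp⟩⟩⟩
    · have : eatrStep (act, p) r = (insert r act, r) := by simp [eatrStep, hrp, hra]
      rw [this] at hst
      injection hst with h1 h2
      subst h1; subst h2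
      exact ⟨Finset.mem_insert_self _ _,
        ⟨p, Finset.mem_erase.mpr ⟨fun e => hrp e.symm, Finset.mem_insert_of_mem hp⟩⟩⟩

lemma opt_lb {n : ℕ} : ∀ (σ : List (Fin n)) (Cs : List (Finset (Fin n)))
    (D act : Finset (Fin n)) (p : Fin n)
    (hF : List.Forall₂ (· ∈ ·) σ Cs) (hcard : ∀ C ∈ Cs, C.card = 2)
    (hp : p ∈ act) (hS : (act.erase p).Nonempty),
    ccount (act, p) σ ≤ listCost D Cs + (act.erase p).inf' hS (fun z => (D \ {p, z}).card) := by
  intro σ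
  induction σ with
  | nil =>
    intro Cs D act p hF hcard hp hS
    cases hF
    exact Nat.zero_le _
  | cons r σ' ih =>
    intro Cs D act p hF hcard hp hS
    rcases hF with _ | ⟨hrD', hF'⟩
    rename_i D' Cs'
    rcases hst : eatrStep (act, p) r with ⟨act', p'⟩
    obtain ⟨hp', hS'⟩ := eatrStep_inv hp hS hst
    have hD'card : D'.card = 2 := hcard D' (by simp)
    have hIH := ih Cs' D' act' p' hF' (fun C hC => hcard C (by simp [hC])) hp' hS'
    have hreq := psi_request act act' p p' r D' hp hS hst hS' hrD' hD'card
    have hlip := psi_lipschitz act p hS D D'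
    have hcc : ccount (act, p) (r :: σ') = (if r ∈ act then 0 else 1) + ccount (act', p') σ' := by
      rw [ccount_cons, hst]
    have hlc : listCost D (D' :: Cs') = (D' \ D).card + listCost D' Cs' := rfl
    omega

/-- a trivial service of any request sequence -/
lemma serves_exists {n : ℕ} (hn : 3 ≤ n) (σ : List (Fin n)) :
    ∃ Cs, Serves 2 σ Cs := by
  have h01 : (⟨0, by omega⟩ : Fin n) ≠ ⟨1, by omega⟩ := by simp [Fin.ext_iff]
  refine ⟨σ.map (fun r => if r = ⟨0, by omega⟩ then {⟨0, by omega⟩, ⟨1, by omega⟩}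
    else {r, ⟨0, by omega⟩}), ?_, ?_⟩
  · induction σ with
    | nil => exact List.Forall₂.nil
    | cons r σ' ih =>
      refine List.Forall₂.cons ?_ ih
      by_cases hr : r = ⟨0, by omega⟩
      · simp only []
        rw [if_pos hr, hr]; simp
      · simp only []
        rw [if_neg hr]; simp
  · intro C hC
    rw [List.mem_map] at hC
    obtain ⟨r, _, rfl⟩ := hC
    by_cases hr : r = ⟨0, by omega⟩
    · rw [if_pos hr, Finset.card_insert_of_notMem (by simp [h01]), Finset.card_singleton]
    · rw [if_neg hr, Finset.card_insert_of_notMem (by simp [hr]), Finset.card_singleton]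
lemma initConf_eq (n : ℕ) (hn : 3 ≤ n) :
    initConf 2 n = {(⟨1, by omega⟩ : Fin n), (⟨0, by omega⟩ : Fin n)} := by
  ext v
  simp only [initConf, Finset.mem_filter, Finset.mem_univ, true_and, Finset.mem_insert,
    Finset.mem_singleton, Fin.ext_iff]
  omega

lemma initConf_erase (n : ℕ) (hn : 3 ≤ n) :
    (initConf 2 n).erase (⟨1, by omega⟩ : Fin n) = {(⟨0, by omega⟩ : Fin n)} := by
  rw [initConf_eq n hn]
  exact Finset.erase_insert (by simp [Fin.ext_iff])

lemma expCost_eq_toReal {n : ℕ} (hn : 3 ≤ n) (σ : List (Fin n)) :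
    expCost 2 (eatrKernel n hn) σ
      = (ecost (eatrKernel n hn) σ [] (initConf 2 n)).toReal := by
  rw [expCost, ecost]
  rw [ENNReal.tsum_toReal_eq
    (fun Cs => ENNReal.mul_ne_top (PMF.apply_ne_top _ _) (ENNReal.natCast_ne_top _))]
  exact tsum_congr fun Cs => by
    rw [ENNReal.toReal_mul, ENNReal.toReal_natCast]
    rfl

theorem eatr_competitive_aux (n : ℕ) (hn : 3 ≤ n) (σ : List (Fin n)) :
    expCost 2 (eatrKernel n hn) σ ≤ (3 / 2 : ℝ) * (OPT 2 n σ : ℝ) := by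
  set p0 : Fin n := ⟨1, by omega⟩ with hp0def
  set z0 : Fin n := ⟨0, by omega⟩ with hz0def
  have hp0 : p0 ∈ initConf 2 n := by
    rw [initConf_eq n hn]; simp [hp0def]
  have hS0 : ((initConf 2 n).erase p0).Nonempty := by
    rw [initConf_erase n hn]; exact Finset.singleton_nonempty _
  -- upper bound on the algorithm's expected cost
  have hkey := eatr_key hn σ [] (initConf 2 n) p0 rfl hp0 hS0
  rw [initConf_erase n hn, Finset.sum_singleton, Finset.card_singleton, Nat.cast_one,
    one_mul, ← initConf_eq n hn] at hkey
  have h2 : 2 * ecost (eatrKernel n hn) σ [] (initConf 2 n)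
      ≤ 3 * (ccount (initConf 2 n, p0) σ : ℝ≥0∞) :=
    (ENNReal.add_le_add_iff_right (by norm_num : (2:ℝ≥0∞) ≠ ∞)).mp hkey
  -- lower bound on the optimal cost
  have hopt : ccount (initConf 2 n, p0) σ ≤ OPT 2 n σ := by
    have hne : {m | ∃ Cs, Serves 2 σ Cs ∧ listCost (initConf 2 n) Cs = m}.Nonempty := by
      obtain ⟨Cs, hCs⟩ := serves_exists hn σ
      exact ⟨listCost (initConf 2 n) Cs, Cs, hCs, rfl⟩
    have hmem := Nat.sInf_mem hne
    obtain ⟨Cs, ⟨hF, hcard⟩, hcost⟩ := hmem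
    have := opt_lb σ Cs (initConf 2 n) (initConf 2 n) p0 hF hcard hp0 hS0
    have hpsi : (((initConf 2 n).erase p0).inf' hS0
        (fun z => ((initConf 2 n) \ {p0, z}).card)) = 0 := by
      have hle : (((initConf 2 n).erase p0).inf' hS0
          (fun z => ((initConf 2 n) \ {p0, z}).card)) ≤ ((initConf 2 n) \ {p0, z0}).card := by
        refine Finset.inf'_le _ ?_
        rw [initConf_erase n hn]; exact Finset.mem_singleton_self _
      rw [← initConf_eq n hn, Finset.sdiff_self, Finset.card_empty] at hle
      omega
    rw [hpsi] at this
    rw [OPT]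
    omega
  -- put the two together
  have h2' : (2:ℝ) * expCost 2 (eatrKernel n hn) σ ≤ 3 * (ccount (initConf 2 n, p0) σ : ℝ) := by
    have := ENNReal.toReal_mono (by
      exact ENNReal.mul_ne_top (by norm_num) (ENNReal.natCast_ne_top _)) h2
    rw [ENNReal.toReal_mul, ENNReal.toReal_mul, ENNReal.toReal_natCast,
      ENNReal.toReal_ofNat, ENNReal.toReal_ofNat] at this
    rw [expCost_eq_toReal hn σ]
    exact this
  have hcast : (ccount (initConf 2 n, p0) σ : ℝ) ≤ (OPT 2 n σ : ℝ) := by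
    exact_mod_cast hopt
  linarith

/-- Algorithm EATR of type `(2,n)` is `3/2`-competitive. -/
theorem eatr_is_three_halves_competitive (n : ℕ) (hn : 3 ≤ n) :
    ∃ a : ℝ, ∀ σ : List (Fin n),
      expCost 2 (eatrKernel n hn) σ ≤ (3 / 2 : ℝ) * (OPT 2 n σ : ℝ) + a := by
  refine ⟨0, fun σ => ?_⟩
  have := eatr_competitive_aux n hn σ
  linarith
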